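/- The complex vector space of homogeneous polynomials of degree 4 in ℂ[x0,x1,x2,x3] that are invariant under the four Heisenberg generator matrices (A1,1), (1,A1), (A2,1), (1,A2) has dimension 5, and the polynomials f0 = x0⁴+x1⁴+x2⁴+x3⁴, f1 = 2(x0²x1²+x2²x3²), f2 = 2(x0²x2²+x1²x3²), f3 = 2(x0²x3²+x1²x2²), f4 = 4x0x1x2x3 form a basis of it. -/

import Mathlib

open Matrix MvPolynomial

noncomputable def A1l : Matrix (Fin 4) (Fin 4) ℝ :=
  !![0, -1, 0, 0; 1, 0, 0, 0; 0, 0, 0, -1; 0, 0, 1, 0]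

noncomputable def A1r : Matrix (Fin 4) (Fin 4) ℝ :=
  !![0, 1, 0, 0; -1, 0, 0, 0; 0, 0, 0, -1; 0, 0, 1, 0]

noncomputable def A2l : Matrix (Fin 4) (Fin 4) ℝ :=
  !![0, 0, -1, 0; 0, 0, 0, 1; 1, 0, 0, 0; 0, -1, 0, 0]

noncomputable def A2r : Matrix (Fin 4) (Fin 4) ℝ :=
  !![0, 0, 1, 0; 0, 0, 0, 1; -1, 0, 0, 0; 0, -1, 0, 0]

/-- The substitution action of a real 4×4 matrix on `ℂ[x₀,x₁,x₂,x₃]`: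
`f(x) ↦ f(M·x)`. -/
noncomputable def subst (M : Matrix (Fin 4) (Fin 4) ℝ) :
    MvPolynomial (Fin 4) ℂ →ₐ[ℂ] MvPolynomial (Fin 4) ℂ :=
  MvPolynomial.aeval (fun i => ∑ j, MvPolynomial.C ((M i j : ℝ) : ℂ) * MvPolynomial.X j)

/-- The space of degree-4 homogeneous polynomials invariant under the four
Heisenberg generators. -/
noncomputable def HeisInv4 : Submodule ℂ (MvPolynomial (Fin 4) ℂ) :=
  homogeneousSubmodule (Fin 4) ℂ 4 ⊓
    ⨅ M ∈ ({A1l, A1r, A2l, A2r} : Set (Matrix (Fin 4) (Fin 4) ℝ)),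
      LinearMap.eqLocus (subst M).toLinearMap LinearMap.id

noncomputable def f0 : MvPolynomial (Fin 4) ℂ := X 0 ^ 4 + X 1 ^ 4 + X 2 ^ 4 + X 3 ^ 4
noncomputable def f1 : MvPolynomial (Fin 4) ℂ := 2 * (X 0 ^ 2 * X 1 ^ 2 + X 2 ^ 2 * X 3 ^ 2)
noncomputable def f2 : MvPolynomial (Fin 4) ℂ := 2 * (X 0 ^ 2 * X 2 ^ 2 + X 1 ^ 2 * X 3 ^ 2)
noncomputable def f3 : MvPolynomial (Fin 4) ℂ := 2 * (X 0 ^ 2 * X 3 ^ 2 + X 1 ^ 2 * X 2 ^ 2)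
noncomputable def f4 : MvPolynomial (Fin 4) ℂ := 4 * (X 0 * X 1 * X 2 * X 3)

noncomputable def D (a b c e : ℕ) : Fin 4 →₀ ℕ := Finsupp.equivFunOnFinite.symm ![a,b,c,e]

@[simp] lemma D_apply_0 (a b c e : ℕ) : D a b c e 0 = a := rfl
@[simp] lemma D_apply_1 (a b c e : ℕ) : D a b c e 1 = b := rfl
@[simp] lemma D_apply_2 (a b c e : ℕ) : D a b c e 2 = c := rfl
@[simp] lemma D_apply_3 (a b c e : ℕ) : D a b c e 3 = e := rfl

lemma D_eta (d : Fin 4 →₀ ℕ) : D (d 0) (d 1) (d 2) (d 3) = d := by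
  ext i; fin_cases i <;> rfl

@[simp] lemma D_eq_iff {a b c e a' b' c' e' : ℕ} :
    D a b c e = D a' b' c' e' ↔ a = a' ∧ b = b' ∧ c = c' ∧ e = e' := by
  constructor
  · intro h
    exact ⟨by rw [← D_apply_0 a b c e, h, D_apply_0], by rw [← D_apply_1 a b c e, h, D_apply_1],
      by rw [← D_apply_2 a b c e, h, D_apply_2], by rw [← D_apply_3 a b c e, h, D_apply_3]⟩
  · rintro ⟨rfl, rfl, rfl, rfl⟩; rfl

lemma D_degree (a b c e : ℕ) : (D a b c e).degree = a + b + c + e := by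
  rw [Finsupp.degree_apply, Finset.sum_subset (Finset.subset_univ _)
    (by intro x _ hx; simpa using Finsupp.notMem_support_iff.mp hx)]
  rw [Fin.sum_univ_four]; rfl

lemma subst_X (M : Matrix (Fin 4) (Fin 4) ℝ) (i : Fin 4) :
    subst M (X i) = C ((M i 0 : ℝ) : ℂ) * X 0 + C ((M i 1 : ℝ) : ℂ) * X 1
      + C ((M i 2 : ℝ) : ℂ) * X 2 + C ((M i 3 : ℝ) : ℂ) * X 3 := by
  simp [subst, Fin.sum_univ_four, add_assoc]

lemma equivMapDomain_cancel (τ : Equiv.Perm (Fin 4)) (d : Fin 4 →₀ ℕ) :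
    Finsupp.equivMapDomain τ (Finsupp.equivMapDomain τ.symm d) = d := by
  ext i; simp [Finsupp.equivMapDomain_apply]

lemma coeff_subst_eq (M : Matrix (Fin 4) (Fin 4) ℝ) (τ : Equiv.Perm (Fin 4)) (ε : Fin 4 → ℂ)
    (h : ∀ i, subst M (X i) = C (ε i) * X (τ i)) (d : Fin 4 →₀ ℕ)
    (g : MvPolynomial (Fin 4) ℂ) :
    coeff d (subst M g) = (∏ i, ε i ^ d (τ i)) * coeff (Finsupp.equivMapDomain τ.symm d) g := by
  induction g using MvPolynomial.induction_on' with
  | add p q hp hq => simp [map_add, hp, hq, mul_add]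
  | monomial u a =>
      have key : subst M (monomial u a) =
          monomial (Finsupp.equivMapDomain τ u) (a * ∏ i, ε i ^ u i) := by
        rw [monomial_eq, _root_.map_mul]
        have hC : subst M (C a) = C a := by simp [subst]
        rw [hC]
        have hprod : subst M (u.prod fun n e => X n ^ e) =
            ∏ i, (C (ε i) * X (τ i)) ^ u i := by
          rw [Finsupp.prod_fintype _ _ (fun i => pow_zero _), map_prod]
          exact Finset.prod_congr rfl fun i _ => by rw [map_pow, h i]
        rw [hprod]
        have : ∏ i, (C (ε i) * X (τ i)) ^ u i
            = (∏ i, C (ε i ^ u i)) * ∏ i, (X (τ i) : MvPolynomial (Fin 4) ℂ) ^ u i := by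
          rw [← Finset.prod_mul_distrib]
          exact Finset.prod_congr rfl fun i _ => by rw [mul_pow, map_pow]
        rw [this, ← map_prod]
        have hre : ∏ i, (X (τ i) : MvPolynomial (Fin 4) ℂ) ^ u i
            = ∏ j, (X j : MvPolynomial (Fin 4) ℂ) ^ (Finsupp.equivMapDomain τ u) j := by
          rw [← Equiv.prod_comp τ (fun j => (X j : MvPolynomial (Fin 4) ℂ) ^ (Finsupp.equivMapDomain τ u) j)]
          exact Finset.prod_congr rfl fun i _ => by
            simp [Finsupp.equivMapDomain_apply]
        rw [hre]
        rw [monomial_eq, Finsupp.prod_fintype _ _ (fun i => pow_zero _), C_mul]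
        ring
      rw [key, coeff_monomial, coeff_monomial]
      by_cases hu : u = Finsupp.equivMapDomain τ.symm d
      · subst hu
        rw [if_pos (equivMapDomain_cancel τ d), if_pos rfl]
        have : ∀ i, (Finsupp.equivMapDomain τ.symm d) i = d (τ i) := by
          intro i; simp [Finsupp.equivMapDomain_apply]
        rw [Finset.prod_congr rfl fun i _ => by rw [this i]]
        ring
      · rw [if_neg hu, if_neg, mul_zero]
        intro hcontra
        apply hu
        rw [← hcontra]
        ext i; simp [Finsupp.equivMapDomain_apply]

def t1 : Equiv.Perm (Fin 4) := ⟨![1,0,3,2], ![1,0,3,2], by decide, by decide⟩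
def t2 : Equiv.Perm (Fin 4) := ⟨![2,3,0,1], ![2,3,0,1], by decide, by decide⟩

lemma t1_map (a b c e : ℕ) : Finsupp.equivMapDomain t1.symm (D a b c e) = D b a e c := by
  ext i; fin_cases i <;> rfl

lemma t2_map (a b c e : ℕ) : Finsupp.equivMapDomain t2.symm (D a b c e) = D c e a b := by
  ext i; fin_cases i <;> rfl

lemma hA1l_X : ∀ i, subst A1l (X i) = C ((![-1,1,-1,1] : Fin 4 → ℂ) i) * X (t1 i) := by
  intro i; fin_cases i <;> simp [subst_X, A1l, t1, Matrix.vecHead, Matrix.vecTail] <;> norm_num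

lemma hA1r_X : ∀ i, subst A1r (X i) = C ((![1,-1,-1,1] : Fin 4 → ℂ) i) * X (t1 i) := by
  intro i; fin_cases i <;> simp [subst_X, A1r, t1, Matrix.vecHead, Matrix.vecTail] <;> norm_num

lemma hA2l_X : ∀ i, subst A2l (X i) = C ((![-1,1,1,-1] : Fin 4 → ℂ) i) * X (t2 i) := by
  intro i; fin_cases i <;> simp [subst_X, A2l, t2, Matrix.vecHead, Matrix.vecTail] <;> norm_num

lemma hA2r_X : ∀ i, subst A2r (X i) = C ((![1,1,-1,-1] : Fin 4 → ℂ) i) * X (t2 i) := by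
  intro i; fin_cases i <;> simp [subst_X, A2r, t2, Matrix.vecHead, Matrix.vecTail] <;> norm_num

lemma R1 {g : MvPolynomial (Fin 4) ℂ} (h : subst A1l g = g) (a b c e : ℕ) :
    coeff (D a b c e) g = (-1 : ℂ)^(b+e) * coeff (D b a e c) g := by
  conv_lhs => rw [← h, coeff_subst_eq A1l t1 _ hA1l_X, t1_map]
  congr 1
  rw [Fin.prod_univ_four]
  show (-1:ℂ)^(D a b c e (t1 0)) * 1^(D a b c e (t1 1)) * (-1:ℂ)^(D a b c e (t1 2)) * 1^(D a b c e (t1 3)) = _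
  show (-1:ℂ)^b * 1^a * (-1:ℂ)^e * 1^c = _
  ring

lemma R2 {g : MvPolynomial (Fin 4) ℂ} (h : subst A1r g = g) (a b c e : ℕ) :
    coeff (D a b c e) g = (-1 : ℂ)^(a+e) * coeff (D b a e c) g := by
  conv_lhs => rw [← h, coeff_subst_eq A1r t1 _ hA1r_X, t1_map]
  congr 1
  rw [Fin.prod_univ_four]
  show (1:ℂ)^b * (-1:ℂ)^a * (-1:ℂ)^e * 1^c = _
  ring

lemma R3 {g : MvPolynomial (Fin 4) ℂ} (h : subst A2l g = g) (a b c e : ℕ) :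
    coeff (D a b c e) g = (-1 : ℂ)^(b+c) * coeff (D c e a b) g := by
  conv_lhs => rw [← h, coeff_subst_eq A2l t2 _ hA2l_X, t2_map]
  congr 1
  rw [Fin.prod_univ_four]
  show (-1:ℂ)^c * (1:ℂ)^e * (1:ℂ)^a * (-1:ℂ)^b = _
  ring

lemma R4 {g : MvPolynomial (Fin 4) ℂ} (h : subst A2r g = g) (a b c e : ℕ) :
    coeff (D a b c e) g = (-1 : ℂ)^(a+b) * coeff (D c e a b) g := by
  conv_lhs => rw [← h, coeff_subst_eq A2r t2 _ hA2r_X, t2_map]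
  congr 1
  rw [Fin.prod_univ_four]
  show (1:ℂ)^c * (1:ℂ)^e * (-1:ℂ)^a * (-1:ℂ)^b = _
  ring

lemma neg_pow_helper {x y : ℕ} (h : Odd (x + y)) : (-1:ℂ)^x = -(-1:ℂ)^y := by
  rcases Nat.even_or_odd x with hx | hx
  · have hy : Odd y := by rcases hx with ⟨m, hm⟩; rcases h with ⟨k, hk⟩; exact ⟨k - m, by omega⟩
    simp [hx.neg_one_pow, hy.neg_one_pow]
  · have hy : Even y := by rcases hx with ⟨m, hm⟩; rcases h with ⟨k, hk⟩; exact ⟨k - m, by omega⟩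
    simp [hx.neg_one_pow, hy.neg_one_pow]

lemma Z1 {g : MvPolynomial (Fin 4) ℂ} (h1 : subst A1l g = g) (h2 : subst A1r g = g)
    {a b c e : ℕ} (hab : Odd (a + b)) : coeff (D a b c e) g = 0 := by
  have e1 := R1 h1 a b c e
  have e2 := R2 h2 a b c e
  have hs : (-1:ℂ)^b = -(-1:ℂ)^a := neg_pow_helper (by rwa [Nat.add_comm] at hab)
  rw [pow_add, hs] at e1
  rw [pow_add] at e2
  linear_combination (e1 + e2) / 2

lemma Z2 {g : MvPolynomial (Fin 4) ℂ} (h3 : subst A2l g = g) (h4 : subst A2r g = g)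
    {a b c e : ℕ} (hac : Odd (a + c)) : coeff (D a b c e) g = 0 := by
  have e3 := R3 h3 a b c e
  have e4 := R4 h4 a b c e
  have hs : (-1:ℂ)^c = -(-1:ℂ)^a := neg_pow_helper (by rwa [Nat.add_comm] at hac)
  rw [pow_add, hs] at e3
  rw [pow_add] at e4
  linear_combination (e3 + e4) / 2

lemma key {g : MvPolynomial (Fin 4) ℂ} (hom : g.IsHomogeneous 4)
    (h1 : subst A1l g = g) (h2 : subst A1r g = g)
    (h3 : subst A2l g = g) (h4 : subst A2r g = g)
    (k0 : coeff (D 4 0 0 0) g = 0) (k1 : coeff (D 2 2 0 0) g = 0)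
    (k2 : coeff (D 2 0 2 0) g = 0) (k3 : coeff (D 2 0 0 2) g = 0)
    (k4 : coeff (D 1 1 1 1) g = 0) : g = 0 := by
  have k0b : coeff (D 0 4 0 0) g = 0 := by
    have t := R1 h1 0 4 0 0; rw [k0, mul_zero] at t; exact t
  have k0c : coeff (D 0 0 4 0) g = 0 := by
    have t := R3 h3 0 0 4 0; rw [k0, mul_zero] at t; exact t
  have k0d : coeff (D 0 0 0 4) g = 0 := by
    have t := R1 h1 0 0 0 4; rw [k0c, mul_zero] at t; exact t
  have k1b : coeff (D 0 0 2 2) g = 0 := by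
    have t := R3 h3 0 0 2 2; rw [k1, mul_zero] at t; exact t
  have k2b : coeff (D 0 2 0 2) g = 0 := by
    have t := R1 h1 0 2 0 2; rw [k2, mul_zero] at t; exact t
  have k3b : coeff (D 0 2 2 0) g = 0 := by
    have t := R1 h1 0 2 2 0; rw [k3, mul_zero] at t; exact t
  apply MvPolynomial.ext
  intro d
  rw [coeff_zero]
  obtain ⟨a, b, c, e, rfl⟩ : ∃ a b c e, d = D a b c e := ⟨d 0, d 1, d 2, d 3, (D_eta d).symm⟩
  by_cases hsum : a + b + c + e = 4
  · rcases Nat.even_or_odd (a + b) with hab | hab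
    · rcases Nat.even_or_odd (a + c) with hac | hac
      · rcases Nat.even_or_odd a with ha | ha
        · -- all even
          have hb : Even b := by rcases ha with ⟨x, hx⟩; rcases hab with ⟨y, hy⟩; exact ⟨y - x, by omega⟩
          have hc : Even c := by rcases ha with ⟨x, hx⟩; rcases hac with ⟨y, hy⟩; exact ⟨y - x, by omega⟩
          have he : Even e := by
            rcases ha with ⟨x, hx⟩; rcases hb with ⟨y, hy⟩; rcases hc with ⟨z, hz⟩
            exact ⟨2 - x - y - z, by omega⟩
          obtain ⟨a', rfl⟩ := ha; obtain ⟨b', rfl⟩ := hb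
          obtain ⟨c', rfl⟩ := hc; obtain ⟨e', rfl⟩ := he
          have ba : a' ≤ 2 := by omega
          have bb : b' ≤ 2 := by omega
          have bc : c' ≤ 2 := by omega
          have be : e' ≤ 2 := by omega
          interval_cases a' <;> interval_cases b' <;> interval_cases c' <;> interval_cases e' <;>
            first
              | (exfalso; omega)
              | exact k0 | exact k0b | exact k0c | exact k0d
              | exact k1 | exact k1b | exact k2 | exact k2b
              | exact k3 | exact k3b
        · -- all odd
          have hb : Odd b := by rcases ha with ⟨x, hx⟩; rcases hab with ⟨y, hy⟩; exact ⟨y - x - 1, by omega⟩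
          have hc : Odd c := by rcases ha with ⟨x, hx⟩; rcases hac with ⟨y, hy⟩; exact ⟨y - x - 1, by omega⟩
          have hval : a = 1 ∧ b = 1 ∧ c = 1 ∧ e = 1 := by
            rcases ha with ⟨x, hx⟩; rcases hb with ⟨y, hy⟩; rcases hc with ⟨z, hz⟩; omega
          obtain ⟨rfl, rfl, rfl, rfl⟩ := hval
          exact k4
      · exact Z2 h3 h4 hac
    · exact Z1 h1 h2 hab
  · exact hom.coeff_eq_zero (by rw [D_degree]; exact hsum)

lemma mem_HeisInv4 {p : MvPolynomial (Fin 4) ℂ} : p ∈ HeisInv4 ↔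
    p.IsHomogeneous 4 ∧ subst A1l p = p ∧ subst A1r p = p ∧
      subst A2l p = p ∧ subst A2r p = p := by
  simp [HeisInv4, Submodule.mem_inf, Submodule.mem_iInf, LinearMap.eqLocus,
    mem_homogeneousSubmodule, Set.mem_insert_iff, Set.mem_singleton_iff, forall_eq_or_imp,
    forall_eq, and_assoc]

lemma single_D0 (n : ℕ) : Finsupp.single (0 : Fin 4) n = D n 0 0 0 := by
  ext i; fin_cases i <;> simp [Finsupp.single_apply]
lemma DX0 (n : ℕ) : (X 0 : MvPolynomial (Fin 4) ℂ) ^ n = monomial (D n 0 0 0) 1 := by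
  rw [X_pow_eq_monomial, single_D0]
lemma single_D1 (n : ℕ) : Finsupp.single (1 : Fin 4) n = D 0 n 0 0 := by
  ext i; fin_cases i <;> simp [Finsupp.single_apply]
lemma DX1 (n : ℕ) : (X 1 : MvPolynomial (Fin 4) ℂ) ^ n = monomial (D 0 n 0 0) 1 := by
  rw [X_pow_eq_monomial, single_D1]
lemma single_D2 (n : ℕ) : Finsupp.single (2 : Fin 4) n = D 0 0 n 0 := by
  ext i; fin_cases i <;> simp [Finsupp.single_apply]
lemma DX2 (n : ℕ) : (X 2 : MvPolynomial (Fin 4) ℂ) ^ n = monomial (D 0 0 n 0) 1 := by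
  rw [X_pow_eq_monomial, single_D2]
lemma single_D3 (n : ℕ) : Finsupp.single (3 : Fin 4) n = D 0 0 0 n := by
  ext i; fin_cases i <;> simp [Finsupp.single_apply]
lemma DX3 (n : ℕ) : (X 3 : MvPolynomial (Fin 4) ℂ) ^ n = monomial (D 0 0 0 n) 1 := by
  rw [X_pow_eq_monomial, single_D3]

lemma D_add (a b c e a' b' c' e' : ℕ) :
    D a b c e + D a' b' c' e' = D (a+a') (b+b') (c+c') (e+e') := by
  ext i; fin_cases i <;> simp

lemma two_C : (2 : MvPolynomial (Fin 4) ℂ) = C 2 := (map_ofNat C 2).symm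
lemma four_C : (4 : MvPolynomial (Fin 4) ℂ) = C 4 := (map_ofNat C 4).symm

lemma f0_eq : f0 = monomial (D 4 0 0 0) 1 + monomial (D 0 4 0 0) 1
    + monomial (D 0 0 4 0) 1 + monomial (D 0 0 0 4) 1 := by
  rw [f0, DX0, DX1, DX2, DX3]

lemma f1_eq : f1 = monomial (D 2 2 0 0) 2 + monomial (D 0 0 2 2) 2 := by
  rw [f1, DX0, DX1, DX2, DX3, monomial_mul, monomial_mul, D_add, D_add, two_C, mul_add,
    C_mul_monomial, C_mul_monomial]
  norm_num

lemma f2_eq : f2 = monomial (D 2 0 2 0) 2 + monomial (D 0 2 0 2) 2 := by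
  rw [f2, DX0, DX1, DX2, DX3, monomial_mul, monomial_mul, D_add, D_add, two_C, mul_add,
    C_mul_monomial, C_mul_monomial]
  norm_num

lemma f3_eq : f3 = monomial (D 2 0 0 2) 2 + monomial (D 0 2 2 0) 2 := by
  rw [f3, DX0, DX1, DX2, DX3, monomial_mul, monomial_mul, D_add, D_add, two_C, mul_add,
    C_mul_monomial, C_mul_monomial]
  norm_num

lemma f4_eq : f4 = monomial (D 1 1 1 1) 4 := by
  rw [f4, ← pow_one (X 0 : MvPolynomial (Fin 4) ℂ), ← pow_one (X 1 : MvPolynomial (Fin 4) ℂ),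
    ← pow_one (X 2 : MvPolynomial (Fin 4) ℂ), ← pow_one (X 3 : MvPolynomial (Fin 4) ℂ),
    DX0, DX1, DX2, DX3, monomial_mul, monomial_mul, monomial_mul, D_add, D_add, D_add,
    four_C, C_mul_monomial]
  norm_num

lemma hom_f0 : f0.IsHomogeneous 4 := by
  rw [f0_eq]
  exact (((isHomogeneous_monomial _ (by rw [D_degree])).add
    (isHomogeneous_monomial _ (by rw [D_degree]))).add
    (isHomogeneous_monomial _ (by rw [D_degree]))).add
    (isHomogeneous_monomial _ (by rw [D_degree]))
lemma hom_f1 : f1.IsHomogeneous 4 := by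
  rw [f1_eq]
  exact (isHomogeneous_monomial _ (by rw [D_degree])).add
    (isHomogeneous_monomial _ (by rw [D_degree]))
lemma hom_f2 : f2.IsHomogeneous 4 := by
  rw [f2_eq]
  exact (isHomogeneous_monomial _ (by rw [D_degree])).add
    (isHomogeneous_monomial _ (by rw [D_degree]))
lemma hom_f3 : f3.IsHomogeneous 4 := by
  rw [f3_eq]
  exact (isHomogeneous_monomial _ (by rw [D_degree])).add
    (isHomogeneous_monomial _ (by rw [D_degree]))
lemma hom_f4 : f4.IsHomogeneous 4 := by
  rw [f4_eq]; exact isHomogeneous_monomial _ (by rw [D_degree])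

lemma inv_f0 (M : Matrix (Fin 4) (Fin 4) ℝ) (τ : Equiv.Perm (Fin 4)) (ε : Fin 4 → ℂ) : True := trivial

lemma inv_A1l_f0 : subst A1l f0 = f0 := by
  simp only [f0, map_add, map_pow, _root_.map_mul, hA1l_X, t1, Equiv.coe_fn_mk, Matrix.cons_val_zero,
    Matrix.cons_val_one, Matrix.head_cons, Matrix.cons_val_two, Matrix.tail_cons,
    Matrix.cons_val_three, _root_.map_neg, C_1, map_ofNat]
  ring
lemma inv_A1l_f1 : subst A1l f1 = f1 := by
  simp only [f1, map_add, map_pow, _root_.map_mul, hA1l_X, t1, Equiv.coe_fn_mk, Matrix.cons_val_zero,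
    Matrix.cons_val_one, Matrix.head_cons, Matrix.cons_val_two, Matrix.tail_cons,
    Matrix.cons_val_three, _root_.map_neg, C_1, map_ofNat]
  ring
lemma inv_A1l_f2 : subst A1l f2 = f2 := by
  simp only [f2, map_add, map_pow, _root_.map_mul, hA1l_X, t1, Equiv.coe_fn_mk, Matrix.cons_val_zero,
    Matrix.cons_val_one, Matrix.head_cons, Matrix.cons_val_two, Matrix.tail_cons,
    Matrix.cons_val_three, _root_.map_neg, C_1, map_ofNat]
  ring
lemma inv_A1l_f3 : subst A1l f3 = f3 := by
  simp only [f3, map_add, map_pow, _root_.map_mul, hA1l_X, t1, Equiv.coe_fn_mk, Matrix.cons_val_zero,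
    Matrix.cons_val_one, Matrix.head_cons, Matrix.cons_val_two, Matrix.tail_cons,
    Matrix.cons_val_three, _root_.map_neg, C_1, map_ofNat]
  ring
lemma inv_A1l_f4 : subst A1l f4 = f4 := by
  simp only [f4, map_add, map_pow, _root_.map_mul, hA1l_X, t1, Equiv.coe_fn_mk, Matrix.cons_val_zero,
    Matrix.cons_val_one, Matrix.head_cons, Matrix.cons_val_two, Matrix.tail_cons,
    Matrix.cons_val_three, _root_.map_neg, C_1, map_ofNat]
  ring
lemma inv_A1r_f0 : subst A1r f0 = f0 := by
  simp only [f0, map_add, map_pow, _root_.map_mul, hA1r_X, t1, Equiv.coe_fn_mk, Matrix.cons_val_zero,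
    Matrix.cons_val_one, Matrix.head_cons, Matrix.cons_val_two, Matrix.tail_cons,
    Matrix.cons_val_three, _root_.map_neg, C_1, map_ofNat]
  ring
lemma inv_A1r_f1 : subst A1r f1 = f1 := by
  simp only [f1, map_add, map_pow, _root_.map_mul, hA1r_X, t1, Equiv.coe_fn_mk, Matrix.cons_val_zero,
    Matrix.cons_val_one, Matrix.head_cons, Matrix.cons_val_two, Matrix.tail_cons,
    Matrix.cons_val_three, _root_.map_neg, C_1, map_ofNat]
  ring
lemma inv_A1r_f2 : subst A1r f2 = f2 := by
  simp only [f2, map_add, map_pow, _root_.map_mul, hA1r_X, t1, Equiv.coe_fn_mk, Matrix.cons_val_zero,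
    Matrix.cons_val_one, Matrix.head_cons, Matrix.cons_val_two, Matrix.tail_cons,
    Matrix.cons_val_three, _root_.map_neg, C_1, map_ofNat]
  ring
lemma inv_A1r_f3 : subst A1r f3 = f3 := by
  simp only [f3, map_add, map_pow, _root_.map_mul, hA1r_X, t1, Equiv.coe_fn_mk, Matrix.cons_val_zero,
    Matrix.cons_val_one, Matrix.head_cons, Matrix.cons_val_two, Matrix.tail_cons,
    Matrix.cons_val_three, _root_.map_neg, C_1, map_ofNat]
  ring
lemma inv_A1r_f4 : subst A1r f4 = f4 := by
  simp only [f4, map_add, map_pow, _root_.map_mul, hA1r_X, t1, Equiv.coe_fn_mk, Matrix.cons_val_zero,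
    Matrix.cons_val_one, Matrix.head_cons, Matrix.cons_val_two, Matrix.tail_cons,
    Matrix.cons_val_three, _root_.map_neg, C_1, map_ofNat]
  ring
lemma inv_A2l_f0 : subst A2l f0 = f0 := by
  simp only [f0, map_add, map_pow, _root_.map_mul, hA2l_X, t2, Equiv.coe_fn_mk, Matrix.cons_val_zero,
    Matrix.cons_val_one, Matrix.head_cons, Matrix.cons_val_two, Matrix.tail_cons,
    Matrix.cons_val_three, _root_.map_neg, C_1, map_ofNat]
  ring
lemma inv_A2l_f1 : subst A2l f1 = f1 := by
  simp only [f1, map_add, map_pow, _root_.map_mul, hA2l_X, t2, Equiv.coe_fn_mk, Matrix.cons_val_zero,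
    Matrix.cons_val_one, Matrix.head_cons, Matrix.cons_val_two, Matrix.tail_cons,
    Matrix.cons_val_three, _root_.map_neg, C_1, map_ofNat]
  ring
lemma inv_A2l_f2 : subst A2l f2 = f2 := by
  simp only [f2, map_add, map_pow, _root_.map_mul, hA2l_X, t2, Equiv.coe_fn_mk, Matrix.cons_val_zero,
    Matrix.cons_val_one, Matrix.head_cons, Matrix.cons_val_two, Matrix.tail_cons,
    Matrix.cons_val_three, _root_.map_neg, C_1, map_ofNat]
  ring
lemma inv_A2l_f3 : subst A2l f3 = f3 := by
  simp only [f3, map_add, map_pow, _root_.map_mul, hA2l_X, t2, Equiv.coe_fn_mk, Matrix.cons_val_zero,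
    Matrix.cons_val_one, Matrix.head_cons, Matrix.cons_val_two, Matrix.tail_cons,
    Matrix.cons_val_three, _root_.map_neg, C_1, map_ofNat]
  ring
lemma inv_A2l_f4 : subst A2l f4 = f4 := by
  simp only [f4, map_add, map_pow, _root_.map_mul, hA2l_X, t2, Equiv.coe_fn_mk, Matrix.cons_val_zero,
    Matrix.cons_val_one, Matrix.head_cons, Matrix.cons_val_two, Matrix.tail_cons,
    Matrix.cons_val_three, _root_.map_neg, C_1, map_ofNat]
  ring
lemma inv_A2r_f0 : subst A2r f0 = f0 := by
  simp only [f0, map_add, map_pow, _root_.map_mul, hA2r_X, t2, Equiv.coe_fn_mk, Matrix.cons_val_zero,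
    Matrix.cons_val_one, Matrix.head_cons, Matrix.cons_val_two, Matrix.tail_cons,
    Matrix.cons_val_three, _root_.map_neg, C_1, map_ofNat]
  ring
lemma inv_A2r_f1 : subst A2r f1 = f1 := by
  simp only [f1, map_add, map_pow, _root_.map_mul, hA2r_X, t2, Equiv.coe_fn_mk, Matrix.cons_val_zero,
    Matrix.cons_val_one, Matrix.head_cons, Matrix.cons_val_two, Matrix.tail_cons,
    Matrix.cons_val_three, _root_.map_neg, C_1, map_ofNat]
  ring
lemma inv_A2r_f2 : subst A2r f2 = f2 := by
  simp only [f2, map_add, map_pow, _root_.map_mul, hA2r_X, t2, Equiv.coe_fn_mk, Matrix.cons_val_zero,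
    Matrix.cons_val_one, Matrix.head_cons, Matrix.cons_val_two, Matrix.tail_cons,
    Matrix.cons_val_three, _root_.map_neg, C_1, map_ofNat]
  ring
lemma inv_A2r_f3 : subst A2r f3 = f3 := by
  simp only [f3, map_add, map_pow, _root_.map_mul, hA2r_X, t2, Equiv.coe_fn_mk, Matrix.cons_val_zero,
    Matrix.cons_val_one, Matrix.head_cons, Matrix.cons_val_two, Matrix.tail_cons,
    Matrix.cons_val_three, _root_.map_neg, C_1, map_ofNat]
  ring
lemma inv_A2r_f4 : subst A2r f4 = f4 := by
  simp only [f4, map_add, map_pow, _root_.map_mul, hA2r_X, t2, Equiv.coe_fn_mk, Matrix.cons_val_zero,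
    Matrix.cons_val_one, Matrix.head_cons, Matrix.cons_val_two, Matrix.tail_cons,
    Matrix.cons_val_three, _root_.map_neg, C_1, map_ofNat]
  ring

lemma mem_f0 : f0 ∈ HeisInv4 :=
  mem_HeisInv4.mpr ⟨hom_f0, inv_A1l_f0, inv_A1r_f0, inv_A2l_f0, inv_A2r_f0⟩
lemma mem_f1 : f1 ∈ HeisInv4 :=
  mem_HeisInv4.mpr ⟨hom_f1, inv_A1l_f1, inv_A1r_f1, inv_A2l_f1, inv_A2r_f1⟩
lemma mem_f2 : f2 ∈ HeisInv4 :=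
  mem_HeisInv4.mpr ⟨hom_f2, inv_A1l_f2, inv_A1r_f2, inv_A2l_f2, inv_A2r_f2⟩
lemma mem_f3 : f3 ∈ HeisInv4 :=
  mem_HeisInv4.mpr ⟨hom_f3, inv_A1l_f3, inv_A1r_f3, inv_A2l_f3, inv_A2r_f3⟩
lemma mem_f4 : f4 ∈ HeisInv4 :=
  mem_HeisInv4.mpr ⟨hom_f4, inv_A1l_f4, inv_A1r_f4, inv_A2l_f4, inv_A2r_f4⟩

lemma mem_all : ∀ i : Fin 5, (![f0, f1, f2, f3, f4] i) ∈ HeisInv4 := by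
  intro i
  fin_cases i
  · exact mem_f0
  · exact mem_f1
  · exact mem_f2
  · exact mem_f3
  · exact mem_f4

lemma li : LinearIndependent ℂ ![f0, f1, f2, f3, f4] := by
  rw [Fintype.linearIndependent_iff]
  intro g hg
  rw [Fin.sum_univ_five] at hg
  simp only [Matrix.cons_val_zero, Matrix.cons_val_one, Matrix.head_cons,
    Matrix.cons_val_two, Matrix.tail_cons, Matrix.cons_val_three, Matrix.cons_val_four] at hg
  have h0 := congrArg (coeff (D 4 0 0 0)) hg
  have h1 := congrArg (coeff (D 2 2 0 0)) hg
  have h2 := congrArg (coeff (D 2 0 2 0)) hg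
  have h3 := congrArg (coeff (D 2 0 0 2)) hg
  have h4 := congrArg (coeff (D 1 1 1 1)) hg
  simp only [coeff_add, coeff_smul, f0_eq, f1_eq, f2_eq, f3_eq, f4_eq, coeff_monomial,
    D_eq_iff, coeff_zero, smul_eq_mul] at h0 h1 h2 h3 h4
  norm_num at h0 h1 h2 h3 h4
  intro i
  fin_cases i <;> assumption

lemma span_ge : HeisInv4 ≤ Submodule.span ℂ (Set.range ![f0, f1, f2, f3, f4]) := by
  intro p hp
  obtain ⟨hom, e1, e2, e3, e4⟩ := mem_HeisInv4.mp hp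
  set q : MvPolynomial (Fin 4) ℂ :=
    (coeff (D 4 0 0 0) p) • f0 + (coeff (D 2 2 0 0) p / 2) • f1 + (coeff (D 2 0 2 0) p / 2) • f2
      + (coeff (D 2 0 0 2) p / 2) • f3 + (coeff (D 1 1 1 1) p / 4) • f4 with hq
  have hqmem : q ∈ HeisInv4 := by
    refine Submodule.add_mem _ (Submodule.add_mem _ (Submodule.add_mem _ (Submodule.add_mem _
      (Submodule.smul_mem _ _ mem_f0) (Submodule.smul_mem _ _ mem_f1))
      (Submodule.smul_mem _ _ mem_f2)) (Submodule.smul_mem _ _ mem_f3))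
      (Submodule.smul_mem _ _ mem_f4)
  obtain ⟨homq, q1, q2, q3, q4⟩ := mem_HeisInv4.mp hqmem
  have hzero : p - q = 0 := by
    apply key (hom.sub homq)
    · rw [map_sub, e1, q1]
    · rw [map_sub, e2, q2]
    · rw [map_sub, e3, q3]
    · rw [map_sub, e4, q4]
    all_goals
      simp only [hq, coeff_sub, coeff_add, coeff_smul, f0_eq, f1_eq, f2_eq, f3_eq, f4_eq,
        coeff_monomial, D_eq_iff, smul_eq_mul]
      norm_num
  have hpq : p = q := by rwa [sub_eq_zero] at hzero
  rw [hpq, hq]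
  have hr : ∀ i : Fin 5, (![f0, f1, f2, f3, f4] i) ∈
      Submodule.span ℂ (Set.range ![f0, f1, f2, f3, f4]) :=
    fun i => Submodule.subset_span ⟨i, rfl⟩
  refine Submodule.add_mem _ (Submodule.add_mem _ (Submodule.add_mem _ (Submodule.add_mem _
    (Submodule.smul_mem _ _ (hr 0)) (Submodule.smul_mem _ _ (hr 1)))
    (Submodule.smul_mem _ _ (hr 2))) (Submodule.smul_mem _ _ (hr 3)))
    (Submodule.smul_mem _ _ (hr 4))


theorem stmt3 :
    Module.finrank ℂ HeisInv4 = 5 ∧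
    (∀ i : Fin 5, (![f0, f1, f2, f3, f4] i) ∈ HeisInv4) ∧
    LinearIndependent ℂ ![f0, f1, f2, f3, f4] ∧
    HeisInv4 ≤ Submodule.span ℂ (Set.range ![f0, f1, f2, f3, f4]) := by
  refine ⟨?_, mem_all, li, span_ge⟩
  have hspan : Submodule.span ℂ (Set.range ![f0, f1, f2, f3, f4]) = HeisInv4 :=
    le_antisymm (Submodule.span_le.mpr (by rintro x ⟨i, rfl⟩; exact mem_all i)) span_ge
  rw [← hspan, finrank_span_eq_card li]
  simp
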